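/- arXiv:1306.3410 — 2 statements merged into one kernel-verified Lean document; each statement's English description precedes it below -/
import Mathlib

section
/- Let B be a unital C*-algebra and X a Hilbert C*-module over B. Then X is full, i.e., the closure of the linear span of {⟨x,y⟩ : x,y ∈ X} equals B, if and only if there exist n ≥ 1 and x_1,…,x_n ∈ X with ∑_{k=1}^n ⟨x_k,x_k⟩ invertible in B. -/
open scoped RightActions
open CStarModule

/-- The Hilbert C⋆-module class as in the older Mathlib (`CStarModule` of Dec 2024): a right
`A`-module (action of `Aᵐᵒᵖ`) with `⟪x, y <• a⟫ = ⟪x, y⟫ * a`. -/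
class CStarModuleRight (A E : Type*) [NonUnitalSemiring A] [StarRing A]
    [Module ℂ A] [AddCommGroup E] [Module ℂ E] [PartialOrder A] [SMul Aᵐᵒᵖ E] [Norm A] [Norm E]
    extends Inner A E where
  inner_add_right {x} {y} {z} : inner x (y + z) = inner x y + inner x z
  inner_self_nonneg {x} : 0 ≤ inner x x
  inner_self {x} : inner x x = 0 ↔ x = 0
  inner_op_smul_right {a : A} {x y : E} : inner x (MulOpposite.op a • y) = inner x y * a
  inner_smul_right_complex {z : ℂ} {x} {y} : inner x (z • y) = z • inner x y
  star_inner x y : star (inner x y) = inner y x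
  norm_eq_sqrt_norm_inner_self x : ‖x‖ = √‖inner x x‖

section CSMR
variable {B X : Type*} [CStarAlgebra B] [PartialOrder B]
  [NormedAddCommGroup X] [Module ℂ X] [SMul Bᵐᵒᵖ X] [CStarModuleRight B X]

theorem CStarModuleRight.inner_zero_right' (x : X) : inner B x (0 : X) = 0 := by
  have h := CStarModuleRight.inner_add_right (A := B) (x := x) (y := (0 : X)) (z := 0)
  simpa using h

theorem CStarModuleRight.inner_neg_right' (x y : X) : inner B x (-y) = -inner B x y := by
  rw [eq_neg_iff_add_eq_zero, ← CStarModuleRight.inner_add_right, neg_add_cancel,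
    CStarModuleRight.inner_zero_right']

theorem CStarModuleRight.inner_sub_right' (x y z : X) :
    inner B x (y - z) = inner B x y - inner B x z := by
  rw [sub_eq_add_neg, CStarModuleRight.inner_add_right, CStarModuleRight.inner_neg_right',
    ← sub_eq_add_neg]

theorem CStarModuleRight.inner_sub_left' (x y z : X) :
    inner B (x - y) z = inner B x z - inner B y z := by
  rw [← CStarModuleRight.star_inner z (x - y), CStarModuleRight.inner_sub_right', star_sub,
    CStarModuleRight.star_inner, CStarModuleRight.star_inner]

theorem CStarModuleRight.inner_op_smul_left' (a : B) (x y : X) :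
    inner B (MulOpposite.op a • x) y = star a * inner B x y := by
  rw [← CStarModuleRight.star_inner y, CStarModuleRight.inner_op_smul_right, star_mul,
    CStarModuleRight.star_inner]

end CSMR

/-- Let `B` be a unital C⋆-algebra and `X` a Hilbert C⋆-module over `B`.
Then `X` is full (the closure of the linear span of `{⟪x, y⟫ : x, y ∈ X}` equals `B`) if and
only if there exist `n ≥ 1` and `x₁, …, xₙ ∈ X` such that `∑ₖ ⟪xₖ, xₖ⟫` is invertible in `B`. -/
theorem full_iff_exists_unimodular_tuple
    {B X : Type*} [CStarAlgebra B] [PartialOrder B] [StarOrderedRing B]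
    [NormedAddCommGroup X] [Module ℂ X] [SMul Bᵐᵒᵖ X] [CStarModuleRight B X] [CompleteSpace X] :
    (Submodule.span ℂ {b : B | ∃ x y : X, (inner B x y : B) = b}).topologicalClosure = ⊤ ↔
      ∃ n : ℕ, 1 ≤ n ∧ ∃ x : Fin n → X, IsUnit (∑ k, (inner B (x k) (x k) : B)) := by
  set S : Set B := {b : B | ∃ x y : X, (inner B x y : B) = b} with hS
  have h01 : (0 : B) ≤ 1 := by simpa using star_mul_self_nonneg (1 : B)
  constructor
  · intro h
    have h1 : (1 : B) ∈ closure ((Submodule.span ℂ S : Submodule ℂ B) : Set B) := by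
      have : (1 : B) ∈ (Submodule.span ℂ S).topologicalClosure := h ▸ Submodule.mem_top
      exact this
    obtain ⟨s, hs, hnorm⟩ : ∃ s ∈ Submodule.span ℂ S, ‖(1 : B) - s‖ < 1/2 := by
      obtain ⟨s, hs, hd⟩ := Metric.mem_closure_iff.mp h1 (1/2) (by norm_num)
      exact ⟨s, hs, by rwa [dist_eq_norm] at hd⟩
    obtain ⟨m, c, g, hsum⟩ := Submodule.mem_span_set'.mp hs
    choose x y hxy using fun i => (g i).2
    set y' : Fin m → X := fun i => c i • y i with hy'
    have hs' : s = ∑ i, (inner B (x i) (y' i) : B) := by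
      rw [← hsum]
      refine Finset.sum_congr rfl fun i _ => ?_
      rw [hy']
      simp [CStarModuleRight.inner_smul_right_complex, hxy]
    have hstar : star s = ∑ i, (inner B (y' i) (x i) : B) := by
      rw [hs']
      simp [CStarModuleRight.star_inner]
    set w : B := ∑ i, ((inner B (x i) (x i) : B) + inner B (y' i) (y' i)) with hw
    have htw : s + star s ≤ w := by
      rw [hstar, hs', ← Finset.sum_add_distrib, hw]
      refine Finset.sum_le_sum fun i _ => ?_
      have h0 : (0 : B) ≤ inner B (x i - y' i) (x i - y' i) := CStarModuleRight.inner_self_nonneg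
      have heq : (inner B (x i - y' i) (x i - y' i) : B) =
          ((inner B (x i) (x i) : B) + inner B (y' i) (y' i))
            - ((inner B (x i) (y' i) : B) + inner B (y' i) (x i)) := by
        simp only [CStarModuleRight.inner_sub_left', CStarModuleRight.inner_sub_right']
        abel
      rw [heq] at h0
      exact sub_nonneg.mp h0
    have hone : (1 : B) ≤ s + star s := by
      set d : B := 1 - s with hd
      have hdsa : IsSelfAdjoint (d + star d) := by
        rw [IsSelfAdjoint, star_add, star_star, add_comm]
      have hnd : ‖d + star d‖ ≤ 1 := by
        calc ‖d + star d‖ ≤ ‖d‖ + ‖star d‖ := norm_add_le _ _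
          _ = ‖d‖ + ‖d‖ := by rw [norm_star]
          _ ≤ 1 := by rw [hd]; linarith [hnorm.le]
      have hle : d + star d ≤ algebraMap ℝ B ‖d + star d‖ :=
        IsSelfAdjoint.le_algebraMap_norm_self hdsa
      have hle2 : algebraMap ℝ B ‖d + star d‖ ≤ 1 := by
        have hnn : (0 : B) ≤ (1 - ‖d + star d‖) • (1 : B) :=
          smul_nonneg (by linarith) h01
        have heq : (1 : B) - algebraMap ℝ B ‖d + star d‖ = (1 - ‖d + star d‖) • 1 := by
          rw [sub_smul, one_smul, Algebra.algebraMap_eq_smul_one]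
        rw [← heq] at hnn
        exact sub_nonneg.mp hnn
      have hkey : d + star d ≤ 1 := hle.trans hle2
      have hrw : s + star s = (1 + 1) - (d + star d) := by
        rw [hd, star_sub, star_one]
        abel
      rw [hrw]
      calc (1 : B) = (1 + 1) - 1 := by abel
        _ ≤ (1 + 1) - (d + star d) := sub_le_sub_left hkey _
    have hwu : IsUnit w := CStarAlgebra.isUnit_of_le (1 : B) (hone.trans htw)
    refine ⟨m + (m + 1), by omega, Fin.append x (Fin.append y' fun _ : Fin 1 => 0), ?_⟩
    have hz : ∑ k : Fin (m + (m + 1)),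
        (inner B (Fin.append x (Fin.append y' fun _ : Fin 1 => (0 : X)) k)
          (Fin.append x (Fin.append y' fun _ : Fin 1 => (0 : X)) k) : B) = w := by
      rw [Fin.sum_univ_add]
      simp only [Fin.append_left, Fin.append_right]
      rw [Fin.sum_univ_add (f := fun j =>
        (inner B (Fin.append y' (fun _ : Fin 1 => (0 : X)) j)
          (Fin.append y' (fun _ : Fin 1 => (0 : X)) j) : B))]
      simp only [Fin.append_left, Fin.append_right, CStarModuleRight.inner_zero_right', Finset.sum_const,
        Finset.card_univ, Fintype.card_fin, one_smul, add_zero]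
      rw [hw, Finset.sum_add_distrib]
    rw [hz]
    exact hwu
  · rintro ⟨n, hn, x, hx⟩
    have hspan : Submodule.span ℂ S = ⊤ := by
      rw [eq_top_iff]
      rintro b -
      obtain ⟨a, ha⟩ := hx
      have hb : b = ∑ k, ((b * ↑a⁻¹) * (inner B (x k) (x k) : B)) := by
        rw [← Finset.mul_sum, ← ha, mul_assoc, Units.inv_mul, mul_one]
      rw [hb]
      refine Submodule.sum_mem _ fun k _ => Submodule.subset_span ?_
      exact ⟨x k <• star (b * ↑a⁻¹), x k, by rw [CStarModuleRight.inner_op_smul_left', star_star]⟩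
    exact eq_top_iff.mpr (hspan ▸ Submodule.le_topologicalClosure _)
end

section
/- Let B be a unital C*-algebra, X a Hilbert C*-module over B, x_1,…,x_n ∈ X, and u_1,…,u_r ∈ X with ∑_{k=1}^r ⟨u_k,u_k⟩ = 1, and let ε > 0. Set b₀ = ∑_{i=1}^n ⟨x_i,x_i⟩, let b = (1 − b₀/ε)⁺ be the positive part computed by continuous functional calculus in B, and put y_k = u_k·b for k = 1,…,r. Then ∑_{i=1}^n ⟨x_i,x_i⟩ + ∑_{k=1}^r ⟨y_k,y_k⟩ is invertible in B; that is, the (n+r)-tuple (x_1,…,x_n,y_1,…,y_r) is unimodular. -/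
open scoped RightActions

/-- The Hilbert C⋆-module class as it stood in Mathlib (December 2024): a right `A`-action
`x <• a` with inner product `A`-linear on the right in the second variable. -/
class RightCStarModule (A E : Type*) [NonUnitalSemiring A] [StarRing A]
    [Module ℂ A] [AddCommGroup E] [Module ℂ E] [PartialOrder A] [SMul Aᵐᵒᵖ E] [Norm A] [Norm E]
    extends Inner A E where
  inner_add_right {x} {y} {z} : inner x (y + z) = inner x y + inner x z
  inner_self_nonneg {x} : 0 ≤ inner x x
  inner_self {x} : inner x x = 0 ↔ x = 0
  inner_op_smul_right {a : A} {x y : E} : inner x (y <• a) = inner x y * a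
  inner_smul_right_complex {z : ℂ} {x} {y} : inner x (z • y) = z • inner x y
  star_inner x y : star (inner x y) = inner y x
  norm_eq_sqrt_norm_inner_self x : ‖x‖ = √‖inner x x‖

/-- Let `B` be a unital C⋆-algebra and `X` a Hilbert C⋆-module over `B`.
Given `x₁, …, xₙ ∈ X` and `u₁, …, u_r ∈ X` with `∑ₖ ⟪uₖ, uₖ⟫ = 1`, and `ε > 0`, set
`b₀ = ∑ᵢ ⟪xᵢ, xᵢ⟫`, `b = (1 - b₀/ε)⁺` (positive part via continuous functional calculus),
and `yₖ = uₖ · b`. Then `∑ᵢ ⟪xᵢ, xᵢ⟫ + ∑ₖ ⟪yₖ, yₖ⟫` is invertible in `B`, i.e. the tuple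
`(x₁, …, xₙ, y₁, …, y_r)` is unimodular. -/
theorem isUnit_sum_inner_self_add_sum_inner_self
    {B X : Type*} [CStarAlgebra B] [PartialOrder B] [StarOrderedRing B]
    [NormedAddCommGroup X] [Module ℂ X] [SMul Bᵐᵒᵖ X] [RightCStarModule B X] [CompleteSpace X]
    {n r : ℕ} (x : Fin n → X) (u : Fin r → X)
    (hu : ∑ k, (inner B (u k) (u k) : B) = 1)
    (ε : ℝ) (hε : 0 < ε)
    (b₀ : B) (hb₀ : b₀ = ∑ i, (inner B (x i) (x i) : B))
    (b : B) (hb : b = (1 - ε⁻¹ • b₀)⁺)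
    (y : Fin r → X) (hy : ∀ k, y k = u k <• b) :
    IsUnit ((∑ i, (inner B (x i) (x i) : B)) + ∑ k, (inner B (y k) (y k) : B)) := by
  have hb₀nn : (0 : B) ≤ b₀ := by
    rw [hb₀]
    exact Finset.sum_nonneg fun i _ => RightCStarModule.inner_self_nonneg
  have hb₀sa : IsSelfAdjoint b₀ := .of_nonneg hb₀nn
  -- express b as cfc of b₀
  set g : ℝ → ℝ := fun t => (1 - ε⁻¹ * t)⁺ with hg
  have hbsa : IsSelfAdjoint b := hb ▸ CFC.posPart_nonneg _ |>.isSelfAdjoint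
  have hbcfc : b = cfc g b₀ := by
    have h1 : (1 - ε⁻¹ • b₀) = cfc (fun t : ℝ => 1 - ε⁻¹ * t) b₀ := by
      simp_rw [← smul_eq_mul]
      rw [cfc_sub (fun _ : ℝ => (1:ℝ)) (fun t : ℝ => ε⁻¹ • t) b₀ (by fun_prop) (by fun_prop),
        cfc_smul ε⁻¹ (fun t : ℝ => t) b₀ (by fun_prop),
        cfc_const 1 b₀, map_one, cfc_id' ℝ b₀]
    have hsa1 : IsSelfAdjoint (1 - ε⁻¹ • b₀) := by
      rw [h1]; exact cfc_predicate _ _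
    rw [hb, CFC.posPart_def, cfcₙ_eq_cfc, h1, ← cfc_comp' (·⁺ : ℝ → ℝ) _ b₀ (by fun_prop)]
  -- sum of inner y y = b * b
  have hsum : ∑ k, (inner B (y k) (y k) : B) = b * b := by
    have : ∀ k, (inner B (y k) (y k) : B) = star b * (inner B (u k) (u k) : B) * b := by
      intro k
      have hl : ∀ (a : B) (v w : X), (inner B (v <• a) w : B) = star a * inner B v w := by
        intro a v w
        rw [← RightCStarModule.star_inner w (v <• a), RightCStarModule.inner_op_smul_right, star_mul,
          RightCStarModule.star_inner]
      rw [hy k, hl, RightCStarModule.inner_op_smul_right, mul_assoc]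
    simp_rw [this, ← Finset.sum_mul, ← Finset.mul_sum, hu, mul_one, hbsa.star_eq]
  have key : b₀ + b * b = cfc (fun t => t + g t * g t) b₀ := by
    rw [cfc_add (a := b₀) _ _ (by fun_prop) (by fun_prop),
      cfc_mul _ _ b₀ (by fun_prop) (by fun_prop), cfc_id' ℝ b₀, ← hbcfc]
  rw [← hb₀, hsum, key, isUnit_cfc_iff _ b₀ (by fun_prop)]
  intro t ht
  have htnn : 0 ≤ t := spectrum_nonneg_of_nonneg hb₀nn ht
  rcases htnn.eq_or_lt with h | h
  · simp [← h, hg]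
  · positivity
end
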